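/- Let V be a finite type, K : V → V → ℝ a symmetric nonnegative weight function with zero diagonal, and L(K) its weighted Laplacian. Fix vertices a, b, i, j ∈ V with K a b > 0 and K i j > 0, and a real number I. Suppose x, y : V → ℝ satisfy L(K) *ᵥ x = I · (e_b − e_a) and L(K) *ᵥ y = (I · K i j / K a b) · (e_i − e_j). Then the current across (i,j) in the first configuration equals the current across (a,b) in the second configuration: K i j · (x i − x j) = K a b · (y b − y a). That is, placing a constant current source of strength I·K i j/K a b across edge (i,j) reproduces at edge (a,b) exactly the current that a source of strength I across (a,b) produces at edge (i,j). -/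

import Mathlib

open Matrix

/-- The weighted Laplacian matrix of a weight function `K`: diagonal entries are
`∑ k, K i k`, off-diagonal entries are `-K i j`. -/
def weightedLaplacian {V : Type*} [Fintype V] [DecidableEq V] (K : V → V → ℝ) :
    Matrix V V ℝ :=
  Matrix.of fun i j => if i = j then ∑ k, K i k else -K i j

section aux
variable {V : Type*} [Fintype V] [DecidableEq V] (K : V → V → ℝ)

lemma wl_transpose (hsymm : ∀ i j, K i j = K j i) :
    (weightedLaplacian K)ᵀ = weightedLaplacian K := by
  ext u v
  by_cases h : u = v
  · subst h; simp [weightedLaplacian]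
  · simp [weightedLaplacian, h, Ne.symm h, hsymm u v, Matrix.transpose_apply]

lemma wl_row (hdiag : ∀ i, K i i = 0) (z : V → ℝ) (u : V) :
    (weightedLaplacian K).mulVec z u = (∑ k, K u k) * z u - ∑ v, K u v * z v := by
  simp only [mulVec, dotProduct, weightedLaplacian, of_apply]
  have : ∀ v : V, (if u = v then ∑ k, K u k else -K u v) * z v
      = (if u = v then (∑ k, K u k + K u v) * z v else 0) - K u v * z v := by
    intro v
    by_cases h : u = v <;> simp [h] <;> ring
  rw [Finset.sum_congr rfl fun v _ => this v, Finset.sum_sub_distrib,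
    Finset.sum_ite_eq Finset.univ u, if_pos (Finset.mem_univ u), hdiag u]
  ring

lemma wl_quad (hsymm : ∀ i j, K i j = K j i) (hdiag : ∀ i, K i i = 0) (z : V → ℝ) :
    z ⬝ᵥ (weightedLaplacian K).mulVec z
      = (1/2) * ∑ u, ∑ v, K u v * (z u - z v)^2 := by
  have expand : ∀ u v : V, K u v * (z u - z v)^2
      = K u v * z u ^ 2 + K u v * z v ^ 2 - 2 * (K u v * (z u * z v)) := by
    intro u v; ring
  simp only [dotProduct, wl_row K hdiag, expand, Finset.sum_sub_distrib,
    Finset.sum_add_distrib]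
  have h1 : ∑ u, ∑ v, K u v * z v ^ 2 = ∑ u, ∑ v, K u v * z u ^ 2 := by
    rw [Finset.sum_comm]
    exact Finset.sum_congr rfl fun u _ => Finset.sum_congr rfl fun v _ => by
      rw [hsymm]
  rw [h1]
  simp only [← Finset.mul_sum, ← Finset.sum_mul]
  have h2 : ∀ u : V, z u * ((∑ k, K u k) * z u - ∑ v, K u v * z v)
      = (∑ k, K u k) * z u ^ 2 - ∑ v, K u v * (z u * z v) := by
    intro u
    rw [mul_sub, Finset.mul_sum]
    congr 1
    · ring
    · exact Finset.sum_congr rfl fun v _ => by ring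
  rw [Finset.sum_congr rfl fun u _ => h2 u, Finset.sum_sub_distrib]
  have h3 : ∑ u, (∑ k, K u k) * z u ^ 2 = ∑ u, ∑ v, K u v * z u ^ 2 := by
    exact Finset.sum_congr rfl fun u _ => by rw [Finset.sum_mul]
  rw [h3]; ring

lemma wl_kernel (hsymm : ∀ i j, K i j = K j i) (hnonneg : ∀ i j, 0 ≤ K i j)
    (hdiag : ∀ i, K i i = 0) (z : V → ℝ)
    (hz : (weightedLaplacian K).mulVec z = 0) (p q : V) (hpq : 0 < K p q) :
    z p = z q := by
  have h0 : ∑ u, ∑ v, K u v * (z u - z v)^2 = 0 := by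
    have := wl_quad K hsymm hdiag z
    rw [hz] at this
    simp at this
    linarith [this]
  have hterm : K p q * (z p - z q)^2 = 0 := by
    have hnn : ∀ u ∈ Finset.univ (α := V), 0 ≤ ∑ v, K u v * (z u - z v)^2 :=
      fun u _ => Finset.sum_nonneg fun v _ => mul_nonneg (hnonneg u v) (sq_nonneg _)
    have hrow : ∑ v, K p v * (z p - z v)^2 = 0 :=
      (Finset.sum_eq_zero_iff_of_nonneg hnn).mp h0 p (Finset.mem_univ p)
    exact (Finset.sum_eq_zero_iff_of_nonneg fun v _ =>
      mul_nonneg (hnonneg p v) (sq_nonneg _)).mp hrow q (Finset.mem_univ q)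
  have := mul_eq_zero.mp hterm
  rcases this with h | h
  · exact absurd h hpq.ne'
  · have := pow_eq_zero_iff (n := 2) (by norm_num) |>.mp h
    linarith

lemma dot_single_pair (z : V → ℝ) (c : ℝ) (p q : V) :
    z ⬝ᵥ (c • (Pi.single p (1:ℝ) - Pi.single q 1)) = c * (z p - z q) := by
  simp [dotProduct, Pi.single_apply, mul_sub, Finset.sum_sub_distrib, mul_comm]
  try ring

end aux

/-- Placing a constant current source of strength `I·K i j/K a b` across edge `(i,j)`
reproduces at edge `(a,b)` exactly the current that a source of strength `I` across
`(a,b)` produces at edge `(i,j)`. -/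
theorem current_source_reciprocity
    {V : Type*} [Fintype V] [DecidableEq V] (K : V → V → ℝ)
    (hsymm : ∀ i j, K i j = K j i) (hnonneg : ∀ i j, 0 ≤ K i j)
    (hdiag : ∀ i, K i i = 0)
    (a b i j : V) (hKab : 0 < K a b) (hKij : 0 < K i j) (I : ℝ)
    (x y : V → ℝ)
    (hx : (weightedLaplacian K).mulVec x = I • (Pi.single b 1 - Pi.single a 1))
    (hy : (weightedLaplacian K).mulVec y
        = (I * K i j / K a b) • (Pi.single i 1 - Pi.single j 1)) :
    K i j * (x i - x j) = K a b * (y b - y a) := by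
  rcases eq_or_ne I 0 with hI | hI
  · subst hI
    simp only [zero_smul] at hx
    have h1 : x i = x j := wl_kernel K hsymm hnonneg hdiag x hx i j hKij
    have hy' : (weightedLaplacian K).mulVec y = 0 := by
      rw [hy]; simp
    have h2 : y b = y a := wl_kernel K hsymm hnonneg hdiag y hy' b a
      (by rw [hsymm]; exact hKab)
    rw [h1, h2]; ring
  · have hsym : x ⬝ᵥ (weightedLaplacian K).mulVec y
        = y ⬝ᵥ (weightedLaplacian K).mulVec x := by
      rw [Matrix.dotProduct_mulVec, ← Matrix.mulVec_transpose, wl_transpose K hsymm,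
        dotProduct_comm]
    rw [hx, hy, dot_single_pair, dot_single_pair] at hsym
    have hKab' := hKab.ne'
    field_simp at hsym
    -- hsym : I * K i j * (x i - x j) = I * (y b - y a) * K a b
    have := mul_left_cancel₀ hI (by rw [hsym] : I * (K i j * (x i - x j)) = I * (K a b * (y b - y a)))
    exact this
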